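/- With I and I' as in the leaf-addition setup, assume furthermore that the star neighborhoods star(x n_i, Scarf(I)) and star(x n_j, Scarf(I)) are disjoint for all i ≠ j. Then for any i ≠ j, none of the sets {x n_i, x n_j}, {x' n_i, x' n_j}, {x n_i, x' n_j} is a face of Scarf(I'). -/

import Mathlib

/-- A subset `σ` of the minimal generating set `M` (squarefree monomials identified with their
sets of variables, lcm identified with union) is a face of the Scarf complex when its lcm is
unique among subsets of `M` (with `lcm ∅ = 1`). -/
def ScarfFace {α : Type*} [DecidableEq α] (M σ : Finset (Finset α)) : Prop :=
  σ ⊆ M ∧ ∀ τ ⊆ M, τ.sup id = σ.sup id → τ = σ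

/-- leaf-addition setup.  Assume the star neighborhoods
`star(x·n_i, Scarf(I))` are pairwise disjoint, interpreted (as in the source) as: for `i ≠ j`
the pair `{x·n_i, x·n_j}` is not a face of `Scarf(I)`.  Then for `i ≠ j` none of the pairs
`{x·n_i, x·n_j}`, `{x'·n_i, x'·n_j}`, `{x·n_i, x'·n_j}` is a face of `Scarf(I')`. -/
theorem forbidden_pairs_after_leaf_addition {α : Type*} [DecidableEq α]
    (x x' : α) (hxx' : x ≠ x') (A B : Finset (Finset α)) (hAB : Disjoint A B)
    (hA : ∀ m ∈ A, x ∉ m ∧ x' ∉ m) (hB : ∀ n ∈ B, x ∉ n ∧ x' ∉ n)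
    (M M' : Finset (Finset α))
    (hM : M = A ∪ B.image (insert x)) (hM' : M' = M ∪ B.image (insert x'))
    (hmin : ∀ a ∈ M', ∀ b ∈ M', a ⊆ b → a = b)
    (hdisj : ∀ n₁ ∈ B, ∀ n₂ ∈ B, n₁ ≠ n₂ → ¬ ScarfFace M {insert x n₁, insert x n₂}) :
    ∀ n₁ ∈ B, ∀ n₂ ∈ B, n₁ ≠ n₂ →
      ¬ ScarfFace M' {insert x n₁, insert x n₂} ∧
      ¬ ScarfFace M' {insert x' n₁, insert x' n₂} ∧
      ¬ ScarfFace M' {insert x n₁, insert x' n₂} := by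
  intro n₁ hn₁ n₂ hn₂ hne
  have hMsub : M ⊆ M' := by rw [hM']; exact Finset.subset_union_left
  set h : α ≃ α := Equiv.swap x x' with hh
  have hcomp : (⇑h ∘ ⇑h) = id := by
    funext a; simp [hh, Equiv.swap_apply_self]
  set F : Finset α → Finset α := fun s => s.image ⇑h with hF
  have hfix : ∀ s : Finset α, x ∉ s → x' ∉ s → F s = s := by
    intro s hx hx'
    show s.image ⇑h = s
    rw [Finset.image_congr (g := id), Finset.image_id]
    intro a ha
    exact Equiv.swap_apply_of_ne_of_ne (fun e => hx (e ▸ ha)) (fun e => hx' (e ▸ ha))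
  have hFx : ∀ n ∈ B, F (insert x n) = insert x' n := by
    intro n hn
    show (insert x n).image ⇑h = insert x' n
    rw [Finset.image_insert, show (h x = x') from Equiv.swap_apply_left x x']
    have := hfix n (hB n hn).1 (hB n hn).2
    rw [show n.image ⇑h = F n from rfl, this]
  have hFx' : ∀ n ∈ B, F (insert x' n) = insert x n := by
    intro n hn
    show (insert x' n).image ⇑h = insert x n
    rw [Finset.image_insert, show (h x' = x) from Equiv.swap_apply_right x x']
    have := hfix n (hB n hn).1 (hB n hn).2
    rw [show n.image ⇑h = F n from rfl, this]
  have hFM' : ∀ m ∈ M', F m ∈ M' := by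
    intro m hm
    rw [hM', hM] at hm ⊢
    rcases Finset.mem_union.mp hm with hm1 | hm2
    · rcases Finset.mem_union.mp hm1 with hmA | hmB
      · refine Finset.mem_union_left _ (Finset.mem_union_left _ ?_)
        rw [hfix m (hA m hmA).1 (hA m hmA).2]; exact hmA
      · obtain ⟨n, hn, rfl⟩ := Finset.mem_image.mp hmB
        exact Finset.mem_union_right _ (by rw [hFx n hn]; exact Finset.mem_image_of_mem _ hn)
    · obtain ⟨n, hn, rfl⟩ := Finset.mem_image.mp hm2
      refine Finset.mem_union_left _ (Finset.mem_union_right _ ?_)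
      rw [hFx' n hn]; exact Finset.mem_image_of_mem _ hn
  have hsup : ∀ τ : Finset (Finset α), (τ.image F).sup id = F (τ.sup id) := by
    intro τ
    induction τ using Finset.induction with
    | empty => simp [hF]
    | insert _ _ hx ih =>
        rw [Finset.image_insert, Finset.sup_insert, Finset.sup_insert, ih]
        show F _ ⊔ F _ = F (_ ⊔ _)
        simp only [hF]
        exact (Finset.image_union _ _).symm
  have hFF : ∀ s : Finset α, F (F s) = s := by
    intro s
    show (s.image ⇑h).image ⇑h = s
    rw [Finset.image_image, hcomp, Finset.image_id]
  have hxn₁M : insert x n₁ ∈ M := by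
    rw [hM]; exact Finset.mem_union_right _ (Finset.mem_image_of_mem _ hn₁)
  have hxn₂M : insert x n₂ ∈ M := by
    rw [hM]; exact Finset.mem_union_right _ (Finset.mem_image_of_mem _ hn₂)
  have hx'n₂M' : insert x' n₂ ∈ M' := by
    rw [hM']; exact Finset.mem_union_right _ (Finset.mem_image_of_mem _ hn₂)
  have hsub₁ : ({insert x n₁, insert x n₂} : Finset (Finset α)) ⊆ M := by
    intro a ha
    rcases Finset.mem_insert.mp ha with rfl | ha
    · exact hxn₁M
    · exact (Finset.mem_singleton.mp ha) ▸ hxn₂M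
  have hd := hdisj n₁ hn₁ n₂ hn₂ hne
  refine ⟨?_, ?_, ?_⟩
  · rintro ⟨hsub, huniq⟩
    exact hd ⟨hsub₁, fun τ hτ hs => huniq τ (hτ.trans hMsub) hs⟩
  · rintro ⟨hsub, huniq⟩
    rw [ScarfFace, not_and] at hd
    push_neg at hd
    obtain ⟨τ, hτM, hτsup, hτne⟩ := hd hsub₁
    have himgσ : ({insert x n₁, insert x n₂} : Finset (Finset α)).image F
        = {insert x' n₁, insert x' n₂} := by
      rw [Finset.image_insert, Finset.image_singleton, hFx n₁ hn₁, hFx n₂ hn₂]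
    have hsup2 : (τ.image F).sup id
        = ({insert x' n₁, insert x' n₂} : Finset (Finset α)).sup id := by
      rw [hsup, hτsup, ← himgσ, hsup]
    have hτ'M : τ.image F ⊆ M' := by
      intro a ha
      obtain ⟨b, hb, rfl⟩ := Finset.mem_image.mp ha
      exact hFM' b (hMsub (hτM hb))
    have heq := huniq (τ.image F) hτ'M hsup2
    apply hτne
    have h2 : (τ.image F).image F
        = ({insert x' n₁, insert x' n₂} : Finset (Finset α)).image F := by rw [heq]
    rw [← himgσ] at h2
    rw [Finset.image_image, Finset.image_image] at h2
    have hcF : (F ∘ F) = id := by funext s; exact hFF s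
    rw [hcF, Finset.image_id, Finset.image_id] at h2
    exact h2
  · rintro ⟨hsub, huniq⟩
    set τ : Finset (Finset α) := {insert x n₁, insert x n₂, insert x' n₂} with hτ
    have hτM' : τ ⊆ M' := by
      intro a ha
      simp only [hτ, Finset.mem_insert, Finset.mem_singleton] at ha
      rcases ha with rfl | rfl | rfl
      · exact hMsub hxn₁M
      · exact hMsub hxn₂M
      · exact hx'n₂M'
    have hsupτ : τ.sup id = ({insert x n₁, insert x' n₂} : Finset (Finset α)).sup id := by
      simp only [hτ, Finset.sup_insert, Finset.sup_singleton, id]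
      ext a
      simp only [Finset.sup_eq_union, Finset.mem_union, Finset.mem_insert]
      tauto
    have heq := huniq τ hτM' hsupτ
    have hmem : insert x n₂ ∈ τ := by simp [hτ]
    rw [heq] at hmem
    rcases Finset.mem_insert.mp hmem with hmem | hmem
    · apply hne
      have h3 := congrArg (·.erase x) hmem
      simpa [Finset.erase_insert (hB n₂ hn₂).1, Finset.erase_insert (hB n₁ hn₁).1] using h3.symm
    · rw [Finset.mem_singleton] at hmem
      have hx3 : x ∈ insert x' n₂ := hmem ▸ Finset.mem_insert_self x n₂
      rcases Finset.mem_insert.mp hx3 with rfl | hc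
      · exact hxx' rfl
      · exact (hB n₂ hn₂).1 hc
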